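/- (Proposition 7: statistical moments via message passing.) Let i ∈ V be a vertex and let κ be a positive integer. Suppose the function x ↦ x_i^κ is Lebesgue-integrable over Δ and that 0 < volume(Δ) < ∞. Then ∫_Δ x_i^κ dx = ∫_ℝ 1[t ∈ D_i]·t^κ·b_i(t) dt; consequently, the κ-th moment of the coordinate X_i under the uniform probability distribution on Δ equals (1/volume(Δ)) · ∫_ℝ 1[t ∈ D_i]·t^κ·b_i(t) dt. -/

import Mathlib

open MeasureTheory
open scoped ENNReal

noncomputable section

/-- The model region `Δ ⊆ ℝ^V` : the set of points `x` with `x_i ∈ D_i` for every vertex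
`i` and `(x_i, x_j) ∈ D_{ij}` for every edge `{i,j}`. -/
def mpModel {V : Type*} (G : SimpleGraph V) (D : V → Set ℝ) (Dij : V → V → Set (ℝ × ℝ)) :
    Set (V → ℝ) :=
  {x | (∀ i, x i ∈ D i) ∧ ∀ i j, G.Adj i j → (x i, x j) ∈ Dij i j}

set_option linter.unusedSectionVars false

open SimpleGraph

namespace MPaux

open SimpleGraph

variable {V : Type*} [DecidableEq V] {G : SimpleGraph V}

/-- The unique path from `u` to the root `r` in a tree. -/
noncomputable def thePath (hG : G.IsTree) (r u : V) : G.Walk u r :=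
  (hG.existsUnique_path u r).choose

lemma thePath_isPath (hG : G.IsTree) (r u : V) : (thePath hG r u).IsPath :=
  (hG.existsUnique_path u r).choose_spec.1

lemma thePath_unique (hG : G.IsTree) {r u : V} (p : G.Walk u r) (hp : p.IsPath) :
    p = thePath hG r u :=
  (hG.existsUnique_path u r).choose_spec.2 p hp

lemma thePath_nil (hG : G.IsTree) (r : V) : thePath hG r r = SimpleGraph.Walk.nil :=
  (thePath_unique hG _ SimpleGraph.Walk.IsPath.nil).symm

/-- The parent of `u` in the tree rooted at `r`. -/
noncomputable def par (hG : G.IsTree) (r u : V) : V :=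
  if u = r then r else (thePath hG r u).getVert 1

lemma par_spec (hG : G.IsTree) {r u : V} (hu : u ≠ r) :
    ∃ h : G.Adj u (par hG r u),
      thePath hG r u = SimpleGraph.Walk.cons h (thePath hG r (par hG r u)) := by
  have hn : ¬(thePath hG r u).Nil := SimpleGraph.Walk.not_nil_of_ne hu
  have hp : par hG r u = (thePath hG r u).getVert 1 := if_neg hu
  have htail : (thePath hG r u).tail.IsPath := by
    have h2 := thePath_isPath hG r u
    rw [← SimpleGraph.Walk.cons_tail_eq _ hn] at h2
    exact h2.of_cons
  have heq := thePath_unique hG _ htail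
  rw [hp]
  exact ⟨(thePath hG r u).adj_snd hn,
    by rw [← heq]; exact (SimpleGraph.Walk.cons_tail_eq _ hn).symm⟩

lemma par_adj (hG : G.IsTree) {r u : V} (hu : u ≠ r) : G.Adj u (par hG r u) :=
  (par_spec hG hu).choose

lemma support_eq (hG : G.IsTree) {r u : V} (hu : u ≠ r) :
    (thePath hG r u).support = u :: (thePath hG r (par hG r u)).support := by
  obtain ⟨h, he⟩ := par_spec hG hu
  rw [he, SimpleGraph.Walk.support_cons]

lemma length_eq (hG : G.IsTree) {r u : V} (hu : u ≠ r) :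
    (thePath hG r u).length = (thePath hG r (par hG r u)).length + 1 := by
  obtain ⟨h, he⟩ := par_spec hG hu
  rw [he, SimpleGraph.Walk.length_cons]

lemma path_drop (hG : G.IsTree) {r u c : V} (hc : c ∈ (thePath hG r u).support) :
    thePath hG r c = (thePath hG r u).dropUntil c hc :=
  (thePath_unique hG _ ((thePath_isPath hG r u).dropUntil hc)).symm

lemma length_split (hG : G.IsTree) {r u c : V} (hc : c ∈ (thePath hG r u).support) :
    (thePath hG r u).length
      = ((thePath hG r u).takeUntil c hc).length + (thePath hG r c).length := by
  rw [path_drop hG hc]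
  conv_lhs => rw [← SimpleGraph.Walk.take_spec _ hc]
  rw [SimpleGraph.Walk.length_append]

lemma length_le (hG : G.IsTree) {r u c : V} (hc : c ∈ (thePath hG r u).support) :
    (thePath hG r c).length ≤ (thePath hG r u).length := by
  rw [length_split hG hc]; omega

lemma eq_of_mem_of_length_eq (hG : G.IsTree) {r u c : V}
    (hc : c ∈ (thePath hG r u).support)
    (hl : (thePath hG r c).length = (thePath hG r u).length) : c = u := by
  have h := length_split hG hc
  have h0 : ((thePath hG r u).takeUntil c hc).length = 0 := by omega
  exact (SimpleGraph.Walk.eq_of_length_eq_zero h0).symm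

lemma eq_of_mem_mem (hG : G.IsTree) (r : V) :
    ∀ n {u c c' : V}, (thePath hG r u).length ≤ n →
      c ∈ (thePath hG r u).support → c' ∈ (thePath hG r u).support →
      (thePath hG r c).length = (thePath hG r c').length → c = c' := by
  intro n
  induction n with
  | zero =>
    intro u c c' hn hc hc' hl
    have h1 : (thePath hG r c).length = (thePath hG r u).length := by
      have := length_le hG hc; have := length_le hG hc'; omega
    have h2 : (thePath hG r c').length = (thePath hG r u).length := by omega
    rw [eq_of_mem_of_length_eq hG hc h1, eq_of_mem_of_length_eq hG hc' h2]
  | succ n ih =>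
    intro u c c' hn hc hc' hl
    by_cases hcu : c = u
    · subst hcu
      have h2 : (thePath hG r c').length = (thePath hG r c).length := by omega
      exact (eq_of_mem_of_length_eq hG hc' h2).symm
    by_cases hc'u : c' = u
    · subst hc'u
      exact eq_of_mem_of_length_eq hG hc hl
    have hur : u ≠ r := by
      rintro rfl
      rw [thePath_nil] at hc
      exact hcu (by simpa using hc)
    rw [support_eq hG hur] at hc hc'
    have hc2 : c ∈ (thePath hG r (par hG r u)).support := by
      rcases List.mem_cons.mp hc with h | h
      · exact absurd h hcu
      · exact h
    have hc'2 : c' ∈ (thePath hG r (par hG r u)).support := by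
      rcases List.mem_cons.mp hc' with h | h
      · exact absurd h hc'u
      · exact h
    exact ih (by have := length_eq hG hur; omega) hc2 hc'2 hl

/-- `below u v` : `v` lies on the path from `u` to the root, i.e. `u` is in the
subtree below `v`. -/
def below (hG : G.IsTree) (r u v : V) : Prop := v ∈ (thePath hG r u).support

lemma below_refl (hG : G.IsTree) (r v : V) : below hG r v v :=
  SimpleGraph.Walk.start_mem_support _

lemma below_root (hG : G.IsTree) (r u : V) : below hG r u r :=
  SimpleGraph.Walk.end_mem_support _

lemma below_r_iff (hG : G.IsTree) {r v : V} : below hG r r v ↔ v = r := by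
  unfold below; rw [thePath_nil]; simp

lemma below_length_le (hG : G.IsTree) {r u v : V} (h : below hG r u v) :
    (thePath hG r v).length ≤ (thePath hG r u).length := length_le hG h

lemma below_step (hG : G.IsTree) {r u v : V} (hur : u ≠ r) (hvu : v ≠ u)
    (h : below hG r u v) : below hG r (par hG r u) v := by
  unfold below at h ⊢
  rw [support_eq hG hur] at h
  rcases List.mem_cons.mp h with h | h
  · exact absurd h hvu
  · exact h

lemma below_up (hG : G.IsTree) {r u v : V} (hur : u ≠ r)
    (h : below hG r (par hG r u) v) : below hG r u v := by
  unfold below at h ⊢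
  rw [support_eq hG hur]
  exact List.mem_cons_of_mem _ h

lemma below_trans (hG : G.IsTree) {r u v w : V} (h1 : below hG r u v)
    (h2 : below hG r v w) : below hG r u w := by
  unfold below at *
  rw [path_drop hG h1] at h2
  exact SimpleGraph.Walk.support_dropUntil_subset _ h1 h2


lemma child_cons (hG : G.IsTree) {r v c : V} (hadj : G.Adj v c) (hne : c ≠ par hG r v) :
    thePath hG r c = SimpleGraph.Walk.cons hadj.symm (thePath hG r v) := by
  have hcv : c ∉ (thePath hG r v).support := by
    intro hmem
    by_cases hvr : v = r
    · subst hvr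
      rw [thePath_nil] at hmem
      exact hadj.ne' (by simpa using hmem)
    · have hcvne : c ≠ v := hadj.ne'
      have h1 : c ∈ (thePath hG r (par hG r v)).support := by
        rw [support_eq hG hvr] at hmem
        rcases List.mem_cons.mp hmem with h | h
        · exact absurd h hcvne
        · exact h
      have hlc := length_le hG h1
      have hlv := length_eq hG hvr
      have hvc : v ∉ (thePath hG r c).support := by
        intro hv
        have := length_le hG hv
        omega
      have hp : (SimpleGraph.Walk.cons hadj (thePath hG r c)).IsPath :=
        (SimpleGraph.Walk.cons_isPath_iff _ _).mpr ⟨thePath_isPath hG r c, hvc⟩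
      have heq := thePath_unique hG _ hp
      have hpv : par hG r v = (thePath hG r v).getVert 1 := if_neg hvr
      rw [← heq] at hpv
      rw [SimpleGraph.Walk.getVert_cons_succ, SimpleGraph.Walk.getVert_zero] at hpv
      exact hne hpv.symm
  have hcr : c ≠ r := fun h => hcv (h ▸ (thePath hG r v).end_mem_support)
  have hp : (SimpleGraph.Walk.cons hadj.symm (thePath hG r v)).IsPath :=
    (SimpleGraph.Walk.cons_isPath_iff _ _).mpr ⟨thePath_isPath hG r v, hcv⟩
  exact (thePath_unique hG _ hp).symm

lemma child_ne_root (hG : G.IsTree) {r v c : V} (hadj : G.Adj v c) (hne : c ≠ par hG r v) :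
    c ≠ r := by
  intro h; subst h
  have := child_cons hG hadj hne
  rw [thePath_nil] at this
  exact absurd (congrArg SimpleGraph.Walk.length this) (by simp)

lemma child_par (hG : G.IsTree) {r v c : V} (hadj : G.Adj v c) (hne : c ≠ par hG r v) :
    par hG r c = v := by
  rw [par, if_neg (child_ne_root hG hadj hne), child_cons hG hadj hne,
    SimpleGraph.Walk.getVert_cons_succ, SimpleGraph.Walk.getVert_zero]

lemma child_below (hG : G.IsTree) {r v c : V} (hadj : G.Adj v c) (hne : c ≠ par hG r v) :
    below hG r c v := by
  unfold below
  rw [child_cons hG hadj hne, SimpleGraph.Walk.support_cons]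
  exact List.mem_cons_of_mem _ (SimpleGraph.Walk.start_mem_support _)

lemma child_length (hG : G.IsTree) {r v c : V} (hadj : G.Adj v c) (hne : c ≠ par hG r v) :
    (thePath hG r c).length = (thePath hG r v).length + 1 := by
  rw [child_cons hG hadj hne, SimpleGraph.Walk.length_cons]

lemma par_not_below (hG : G.IsTree) {r v : V} (hvr : v ≠ r) :
    ¬ below hG r (par hG r v) v := by
  intro h
  have h1 := below_length_le hG h
  have h2 := length_eq hG hvr
  omega

lemma exists_child (hG : G.IsTree) (r v : V) :
    ∀ n {u : V}, (thePath hG r u).length ≤ n → below hG r u v → u ≠ v →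
      ∃ c, G.Adj v c ∧ c ≠ par hG r v ∧ below hG r u c := by
  intro n
  induction n with
  | zero =>
    intro u hn hb hne
    have hur : u ≠ r := by
      rintro rfl
      exact hne (below_r_iff hG |>.mp hb).symm
    have := length_eq hG hur
    omega
  | succ n ih =>
    intro u hn hb hne
    have hur : u ≠ r := by
      rintro rfl
      exact hne (below_r_iff hG |>.mp hb).symm
    have hpb : below hG r (par hG r u) v := below_step hG hur hne.symm hb
    by_cases hpu : par hG r u = v
    · refine ⟨u, ?_, ?_, below_refl hG r u⟩
      · have := par_adj hG hur
        rw [hpu] at this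
        exact this.symm
      · intro hupv
        have hvr : v ≠ r := by
          rintro rfl
          rw [par, if_pos rfl] at hupv
          exact hur hupv
        have h1 := length_eq hG hur
        have h2 := length_eq hG hvr
        rw [hpu] at h1
        rw [← hupv] at h2
        omega
    · obtain ⟨c, h1, h2, h3⟩ :=
        ih (by have := length_eq hG hur; omega) hpb hpu
      exact ⟨c, h1, h2, below_up hG hur h3⟩

lemma child_unique (hG : G.IsTree) {r v u c c' : V}
    (hc : G.Adj v c ∧ c ≠ par hG r v ∧ below hG r u c)
    (hc' : G.Adj v c' ∧ c' ≠ par hG r v ∧ below hG r u c') : c = c' := by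
  obtain ⟨h1, h2, h3⟩ := hc
  obtain ⟨h1', h2', h3'⟩ := hc'
  have hl : (thePath hG r c).length = (thePath hG r c').length := by
    rw [child_length hG h1 h2, child_length hG h1' h2']
  exact eq_of_mem_mem hG r (thePath hG r u).length le_rfl h3 h3' hl

variable [Fintype V]

/-- The subtree below `v` (as a finset), including `v` itself. -/
noncomputable def Sf (hG : G.IsTree) (r v : V) : Finset V :=
  Finset.univ.filter (fun u => v ∈ (thePath hG r u).support)

lemma mem_Sf (hG : G.IsTree) {r v u : V} : u ∈ Sf hG r v ↔ below hG r u v := by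
  simp [Sf, below]

lemma self_mem_Sf (hG : G.IsTree) (r v : V) : v ∈ Sf hG r v :=
  (mem_Sf hG).mpr (below_refl hG r v)

lemma Sf_root (hG : G.IsTree) (r : V) : Sf hG r r = Finset.univ := by
  ext u; simp [mem_Sf hG, below_root hG r u]

lemma r_not_mem_Sf (hG : G.IsTree) {r c : V} (hcr : c ≠ r) : r ∉ Sf hG r c := by
  rw [mem_Sf hG]
  intro h
  exact hcr ((below_r_iff hG).mp h)

lemma Sf_child_subset (hG : G.IsTree) {r v c : V} (hadj : G.Adj v c)
    (hne : c ≠ par hG r v) : Sf hG r c ⊆ Sf hG r v := by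
  intro u hu
  rw [mem_Sf hG] at hu ⊢
  exact below_trans hG hu (child_below hG hadj hne)

lemma not_mem_Sf_child (hG : G.IsTree) {r v c : V} (hadj : G.Adj v c)
    (hne : c ≠ par hG r v) : v ∉ Sf hG r c := by
  rw [mem_Sf hG]
  intro h
  have h1 := below_length_le hG h
  have h2 := child_length hG hadj hne
  omega

lemma par_not_mem_Sf_child (hG : G.IsTree) {r v c : V} (hvr : v ≠ r) (hadj : G.Adj v c)
    (hne : c ≠ par hG r v) : par hG r v ∉ Sf hG r c := by
  rw [mem_Sf hG]
  intro h
  have h1 := below_length_le hG h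
  have h2 := child_length hG hadj hne
  have h3 := length_eq hG hvr
  omega

lemma mem_Sf_step (hG : G.IsTree) {r c u : V} (hcr : c ≠ r) (h : u ∈ Sf hG r c)
    (hne : u ≠ c) : u ≠ r ∧ par hG r u ∈ Sf hG r c := by
  have hur : u ≠ r := by
    rintro rfl
    exact r_not_mem_Sf hG hcr h
  rw [mem_Sf hG] at h ⊢
  exact ⟨hur, below_step hG hur (fun hh => hne hh.symm) h⟩

/-- The children of `v` in the tree rooted at `r`. -/
noncomputable def Cf [DecidableRel G.Adj] (hG : G.IsTree) (r v : V) : Finset V :=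
  (G.neighborFinset v).erase (par hG r v)

lemma mem_Cf [DecidableRel G.Adj] (hG : G.IsTree) {r v c : V} :
    c ∈ Cf hG r v ↔ G.Adj v c ∧ c ≠ par hG r v := by
  simp [Cf, and_comm]

lemma Sf_partition [DecidableRel G.Adj] (hG : G.IsTree) (r v : V) :
    Sf hG r v = insert v ((Cf hG r v).biUnion (Sf hG r)) := by
  ext u
  simp only [Finset.mem_insert, Finset.mem_biUnion, mem_Sf hG, mem_Cf hG]
  constructor
  · intro h
    by_cases hu : u = v
    · exact Or.inl hu
    · obtain ⟨c, h1, h2, h3⟩ := exists_child hG r v (thePath hG r u).length le_rfl h hu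
      exact Or.inr ⟨c, ⟨h1, h2⟩, (mem_Sf hG).mp ((mem_Sf hG).mpr h3)⟩
  · rintro (rfl | ⟨c, ⟨h1, h2⟩, h3⟩)
    · exact below_refl hG r u
    · exact below_trans hG h3 (child_below hG h1 h2)

lemma Sf_disjoint [DecidableRel G.Adj] (hG : G.IsTree) {r v c c' : V} (hc : c ∈ Cf hG r v)
    (hc' : c' ∈ Cf hG r v) (hne : c ≠ c') : Disjoint (Sf hG r c) (Sf hG r c') := by
  rw [mem_Cf hG] at hc hc'
  rw [Finset.disjoint_left]
  intro u hu hu'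
  exact hne (child_unique hG ⟨hc.1, hc.2, (mem_Sf hG).mp hu⟩
    ⟨hc'.1, hc'.2, (mem_Sf hG).mp hu'⟩)

lemma v_not_mem_biUnion [DecidableRel G.Adj] (hG : G.IsTree) (r v : V) :
    v ∉ (Cf hG r v).biUnion (Sf hG r) := by
  rw [Finset.mem_biUnion]
  rintro ⟨c, hc, hmem⟩
  rw [mem_Cf hG] at hc
  exact not_mem_Sf_child hG hc.1 hc.2 hmem

lemma Sf_card_lt [DecidableRel G.Adj] (hG : G.IsTree) {r v c : V} (hc : c ∈ Cf hG r v) :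
    (Sf hG r c).card < (Sf hG r v).card := by
  rw [mem_Cf hG] at hc
  refine Finset.card_lt_card ⟨Sf_child_subset hG hc.1 hc.2, fun hsub => ?_⟩
  exact not_mem_Sf_child hG hc.1 hc.2 (hsub (self_mem_Sf hG r v))

lemma Cf_root [DecidableRel G.Adj] (hG : G.IsTree) (r : V) :
    Cf hG r r = G.neighborFinset r := by
  rw [Cf, par, if_pos rfl]
  exact Finset.erase_eq_of_notMem (by simp)


section Marginal

variable {V : Type*} [Fintype V] [DecidableEq V]

/-- `Unused f s` : the function `f` does not depend on the coordinates in `s`. -/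
def Unused (f : (V → ℝ) → ℝ≥0∞) (s : Finset V) : Prop :=
  ∀ x y : V → ℝ, (∀ u, u ∉ s → x u = y u) → f x = f y

lemma Unused.mono {f : (V → ℝ) → ℝ≥0∞} {s t : Finset V} (h : Unused f s) (hts : t ⊆ s) :
    Unused f t := by
  intro x y hxy
  exact h x y fun u hu => hxy u (fun hmem => hu (hts hmem))

lemma Unused.mul {f g : (V → ℝ) → ℝ≥0∞} {s : Finset V} (hf : Unused f s) (hg : Unused g s) :
    Unused (fun x => f x * g x) s := fun x y h => by
  dsimp only
  rw [hf x y h, hg x y h]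

lemma unused_prod {ι : Type*} {C : Finset ι} {w : ι → (V → ℝ) → ℝ≥0∞} {s : Finset V}
    (h : ∀ c ∈ C, Unused (w c) s) : Unused (fun x => ∏ c ∈ C, w c x) s := by
  intro x y hxy
  exact Finset.prod_congr rfl fun c hc => h c hc x y hxy

lemma unused_comp2 {F : ℝ → ℝ → ℝ≥0∞} {a b : V} {s : Finset V} (ha : a ∉ s) (hb : b ∉ s) :
    Unused (fun x => F (x a) (x b)) s := by
  intro x y hxy
  dsimp only
  rw [hxy a ha, hxy b hb]

/-- Pull a factor not depending on the integrated coordinates out of a marginal. -/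
lemma lmarginal_mul_unused {f g : (V → ℝ) → ℝ≥0∞} {s : Finset V}
    (hf : Measurable f) (hg : Unused g s) :
    (∫⋯∫⁻_s, (fun x => g x * f x)) = fun x => g x * (∫⋯∫⁻_s, f) x := by
  ext x
  rw [MeasureTheory.lmarginal]
  have h1 : ∀ y : (u : s) → ℝ, g (Function.updateFinset x s y) = g x := by
    intro y
    apply hg
    intro u hu
    simp [Function.updateFinset, hu]
  simp_rw [h1]
  rw [MeasureTheory.lintegral_const_mul (g x)
    (show Measurable fun y : (u : s) → ℝ => f (Function.updateFinset x s y) from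
      hf.comp measurable_updateFinset)]
  rfl

lemma unused_lmarginal {f : (V → ℝ) → ℝ≥0∞} {s t : Finset V} (hf : Unused f s)
    (hst : Disjoint s t) : Unused (∫⋯∫⁻_t, f) s := by
  intro x y hxy
  rw [MeasureTheory.lmarginal, MeasureTheory.lmarginal]
  congr 1
  ext z
  apply hf
  intro u hu
  simp only [Function.updateFinset]
  by_cases hut : u ∈ t
  · simp [hut]
  · simp [hut, hxy u hu]

/-- Key splitting lemma: a marginal over a disjoint union of coordinate blocks of a
product of functions, each depending only on "its own" block, factors. -/
lemma lmarginal_prod_split {ι : Type*} [DecidableEq ι] (C : Finset ι) :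
    ∀ (S : ι → Finset V) (w : ι → (V → ℝ) → ℝ≥0∞) (g : (V → ℝ) → ℝ≥0∞),
    (∀ c ∈ C, Measurable (w c)) → Measurable g →
    (∀ c ∈ C, ∀ c' ∈ C, c ≠ c' → Disjoint (S c) (S c')) →
    (∀ c ∈ C, Unused g (S c)) →
    (∀ c ∈ C, ∀ c' ∈ C, c ≠ c' → Unused (w c') (S c)) →
    (∫⋯∫⁻_(C.biUnion S), (fun x => g x * ∏ c ∈ C, w c x))
      = fun x => g x * ∏ c ∈ C, (∫⋯∫⁻_(S c), w c) x := by
  induction C using Finset.induction with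
  | empty => intro S w g _ _ _ _ _; simp
  | @insert a C ha ih =>
    intro S w g hw hg hdisj hgU hwU
    have hwa : Measurable (w a) := hw a (Finset.mem_insert_self a C)
    have hdisjbi : Disjoint (C.biUnion S) (S a) := by
      rw [Finset.disjoint_biUnion_left]
      intro c hc
      exact hdisj c (Finset.mem_insert_of_mem hc) a (Finset.mem_insert_self a C)
        (fun h => ha (h ▸ hc))
    have hmeas : Measurable (fun x => g x * ∏ c ∈ insert a C, w c x) :=
      hg.mul (Finset.measurable_prod _ fun c hc => hw c hc)
    rw [Finset.biUnion_insert, Finset.union_comm,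
      MeasureTheory.lmarginal_union _ _ hmeas hdisjbi]
    have hinner : (∫⋯∫⁻_(S a), fun x => g x * ∏ c ∈ insert a C, w c x)
        = fun x => (g x * ∏ c ∈ C, w c x) * (∫⋯∫⁻_(S a), w a) x := by
      have heq : (fun x => g x * ∏ c ∈ insert a C, w c x)
          = fun x => (g x * ∏ c ∈ C, w c x) * w a x := by
        ext x
        rw [Finset.prod_insert ha]
        ring
      rw [heq]
      apply lmarginal_mul_unused hwa
      apply Unused.mul (hgU a (Finset.mem_insert_self a C))
      apply unused_prod
      intro c hc
      exact hwU a (Finset.mem_insert_self a C) c (Finset.mem_insert_of_mem hc)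
        (fun h => ha (h ▸ hc))
    rw [hinner]
    have heq2 : (fun x => (g x * ∏ c ∈ C, w c x) * (∫⋯∫⁻_(S a), w a) x)
        = fun x => (fun y => g y * (∫⋯∫⁻_(S a), w a) y) x * ∏ c ∈ C, w c x := by
      ext x; ring
    rw [heq2, ih S w (fun y => g y * (∫⋯∫⁻_(S a), w a) y)
      (fun c hc => hw c (Finset.mem_insert_of_mem hc))
      (hg.mul (hwa.lmarginal _))
      (fun c hc c' hc' h => hdisj c (Finset.mem_insert_of_mem hc) c'
        (Finset.mem_insert_of_mem hc') h)
      (fun c hc => Unused.mul (hgU c (Finset.mem_insert_of_mem hc))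
        (unused_lmarginal
          (hwU c (Finset.mem_insert_of_mem hc) a (Finset.mem_insert_self a C)
            (fun h => ha (h.symm ▸ hc)))
          (hdisj c (Finset.mem_insert_of_mem hc) a (Finset.mem_insert_self a C)
            (fun h => ha (h ▸ hc)))))
      (fun c hc c' hc' h => hwU c (Finset.mem_insert_of_mem hc) c'
        (Finset.mem_insert_of_mem hc') h)]
    ext x
    rw [Finset.prod_insert ha]
    ring

end Marginal


section Main

open SimpleGraph

variable {V : Type*} [Fintype V] [DecidableEq V] {G : SimpleGraph V}

/-- The local weight of vertex `u` (its own constraint together with the constraint on the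
edge to its parent). -/
noncomputable def gfun (hG : G.IsTree) (r : V) (D : V → Set ℝ)
    (Dij : V → V → Set (ℝ × ℝ)) (u : V) : (V → ℝ) → ℝ≥0∞ :=
  fun x => (D u).indicator 1 (x u) *
    (Dij u (par hG r u)).indicator 1 (x u, x (par hG r u))

/-- The weight of the whole subtree below `v`. -/
noncomputable def Wfun (hG : G.IsTree) (r : V) (D : V → Set ℝ)
    (Dij : V → V → Set (ℝ × ℝ)) (v : V) : (V → ℝ) → ℝ≥0∞ :=
  fun x => ∏ u ∈ Sf hG r v, gfun hG r D Dij u x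

variable {D : V → Set ℝ} {Dij : V → V → Set (ℝ × ℝ)}

lemma gfun_meas (hG : G.IsTree) (r : V) (hD : ∀ i, MeasurableSet (D i))
    (hDij : ∀ i j, MeasurableSet (Dij i j)) (u : V) :
    Measurable (gfun hG r D Dij u) := by
  apply Measurable.mul
  · exact (measurable_one.indicator (hD u)).comp (measurable_pi_apply u)
  · exact (measurable_one.indicator (hDij u (par hG r u))).comp
      ((measurable_pi_apply u).prodMk (measurable_pi_apply (par hG r u)))

lemma Wfun_meas (hG : G.IsTree) (r : V) (hD : ∀ i, MeasurableSet (D i))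
    (hDij : ∀ i j, MeasurableSet (Dij i j)) (v : V) :
    Measurable (Wfun hG r D Dij v) :=
  Finset.measurable_prod _ fun u _ => gfun_meas hG r hD hDij u

lemma gfun_unused (hG : G.IsTree) (r : V) {u : V} {s : Finset V} (hu : u ∉ s)
    (hpu : par hG r u ∉ s) : Unused (gfun hG r D Dij u) s :=
  unused_comp2 (F := fun a b => (D u).indicator 1 a *
    (Dij u (par hG r u)).indicator 1 (a, b)) hu hpu

lemma Wfun_unused (hG : G.IsTree) (r : V) {c : V} {s : Finset V}
    (h : ∀ u ∈ Sf hG r c, u ∉ s ∧ par hG r u ∉ s) : Unused (Wfun hG r D Dij c) s :=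
  unused_prod fun u hu => gfun_unused hG r (h u hu).1 (h u hu).2

lemma Wfun_unused_sibling [DecidableRel G.Adj] (hG : G.IsTree) (r : V) {v c c' : V}
    (hc : c ∈ Cf hG r v) (hc' : c' ∈ Cf hG r v) (hne : c ≠ c') :
    Unused (Wfun hG r D Dij c') (Sf hG r c) := by
  obtain ⟨h1', h2'⟩ := (mem_Cf hG).mp hc'
  apply Wfun_unused hG r
  intro u hu
  have hdisj := Sf_disjoint hG hc' hc hne.symm
  refine ⟨Finset.disjoint_left.mp hdisj hu, ?_⟩
  by_cases huc : u = c'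
  · subst huc
    rw [child_par hG h1' h2']
    by_cases hvr : v = r
    · subst hvr
      exact r_not_mem_Sf hG (child_ne_root hG ((mem_Cf hG).mp hc).1 ((mem_Cf hG).mp hc).2)
    · obtain ⟨h1, h2⟩ := (mem_Cf hG).mp hc
      exact not_mem_Sf_child hG h1 h2
  · have := mem_Sf_step hG (child_ne_root hG h1' h2') hu huc
    exact Finset.disjoint_left.mp hdisj this.2

/-- The main inductive claim: the marginal of the subtree weight over the subtree
coordinates is the message from `v` to its parent. -/
lemma claim [DecidableRel G.Adj] (hG : G.IsTree) (r : V)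
    (hD : ∀ i, MeasurableSet (D i)) (hDij : ∀ i j, MeasurableSet (Dij i j))
    (m : V → V → ℝ → ℝ≥0∞)
    (hm : ∀ i j, G.Adj i j → ∀ t : ℝ,
      m i j t = ∫⁻ x : ℝ,
        (Dij i j).indicator (1 : ℝ × ℝ → ℝ≥0∞) (x, t) *
          (D i).indicator (1 : ℝ → ℝ≥0∞) x *
          ∏ c ∈ (G.neighborFinset i).erase j, m c i x) :
    ∀ n (v : V), (Sf hG r v).card ≤ n → v ≠ r → ∀ x : V → ℝ,
      (∫⋯∫⁻_(Sf hG r v), Wfun hG r D Dij v) x = m v (par hG r v) (x (par hG r v)) := by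
  intro n
  induction n with
  | zero =>
    intro v hcard hvr x
    have := Finset.card_pos.mpr ⟨v, self_mem_Sf hG r v⟩
    omega
  | succ n ih =>
    intro v hcard hvr x
    have hpadj : G.Adj v (par hG r v) := par_adj hG hvr
    have hpart := Sf_partition hG r v
    have hWsplit : Wfun hG r D Dij v
        = fun y => gfun hG r D Dij v y * ∏ c ∈ Cf hG r v, Wfun hG r D Dij c y := by
      ext y
      rw [Wfun, hpart, Finset.prod_insert (v_not_mem_biUnion hG r v),
        Finset.prod_biUnion (fun c hc c' hc' hcc' => Sf_disjoint hG hc hc' hcc')]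
      rfl
    have hinner : (∫⋯∫⁻_((Cf hG r v).biUnion (Sf hG r)), Wfun hG r D Dij v)
        = fun y => gfun hG r D Dij v y * ∏ c ∈ Cf hG r v, m c v (y v) := by
      rw [hWsplit, lmarginal_prod_split (Cf hG r v) (Sf hG r) _ _
        (fun c _ => Wfun_meas hG r hD hDij c)
        (gfun_meas hG r hD hDij v)
        (fun c hc c' hc' hcc' => Sf_disjoint hG hc hc' hcc')
        (fun c hc => gfun_unused hG r
          (not_mem_Sf_child hG ((mem_Cf hG).mp hc).1 ((mem_Cf hG).mp hc).2)
          (par_not_mem_Sf_child hG hvr ((mem_Cf hG).mp hc).1 ((mem_Cf hG).mp hc).2))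
        (fun c hc c' hc' hcc' => Wfun_unused_sibling hG r hc hc' hcc')]
      ext y
      congr 1
      apply Finset.prod_congr rfl
      intro c hc
      obtain ⟨h1, h2⟩ := (mem_Cf hG).mp hc
      have hcard' : (Sf hG r c).card ≤ n := by
        have := Sf_card_lt hG hc
        omega
      rw [ih c hcard' (child_ne_root hG h1 h2) y, child_par hG h1 h2]
    rw [hpart, Finset.insert_eq,
      MeasureTheory.lmarginal_union _ _ (Wfun_meas hG r hD hDij v)
        (Finset.disjoint_singleton_left.mpr (v_not_mem_biUnion hG r v))]
    rw [hinner, MeasureTheory.lmarginal_singleton]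
    rw [hm v (par hG r v) hpadj (x (par hG r v))]
    apply MeasureTheory.lintegral_congr
    intro t
    have hpv : par hG r v ≠ v := hpadj.ne'
    rw [gfun]
    simp only [Function.update_self, Function.update_of_ne hpv]
    rw [show Cf hG r v = (G.neighborFinset v).erase (par hG r v) from rfl]
    ring
end Main


section Root

open SimpleGraph

variable {V : Type*} [Fintype V] [DecidableEq V] {G : SimpleGraph V}
variable {D : V → Set ℝ} {Dij : V → V → Set (ℝ × ℝ)}

lemma mpModel_measurableSet (G : SimpleGraph V) (hD : ∀ i, MeasurableSet (D i))
    (hDij : ∀ i j, MeasurableSet (Dij i j)) : MeasurableSet (mpModel G D Dij) := by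
  have heq : mpModel G D Dij =
      (⋂ i, (fun x : V → ℝ => x i) ⁻¹' D i) ∩
      ⋂ (i) (j) (_ : G.Adj i j), (fun x : V → ℝ => (x i, x j)) ⁻¹' Dij i j := by
    ext x
    simp [mpModel, Set.mem_iInter]
  rw [heq]
  refine (MeasurableSet.iInter fun i => (measurable_pi_apply i) (hD i)).inter ?_
  refine MeasurableSet.iInter fun i => MeasurableSet.iInter fun j =>
    MeasurableSet.iInter fun _ => ?_
  exact ((measurable_pi_apply i).prodMk (measurable_pi_apply j)) (hDij i j)

lemma indicator_eq [DecidableRel G.Adj] (hG : G.IsTree) (D : V → Set ℝ)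
    {Dij : V → V → Set (ℝ × ℝ)}
    (hsym : ∀ i j, ∀ p : ℝ × ℝ, p ∈ Dij i j ↔ p.swap ∈ Dij j i) (r : V) (x : V → ℝ) :
    (mpModel G D Dij).indicator (1 : (V → ℝ) → ℝ≥0∞) x
      = (D r).indicator 1 (x r) * ∏ u ∈ Finset.univ.erase r, gfun hG r D Dij u x := by
  by_cases hx : x ∈ mpModel G D Dij
  · rw [Set.indicator_of_mem hx]
    have h1 : (D r).indicator (1 : ℝ → ℝ≥0∞) (x r) = 1 := by
      rw [Set.indicator_of_mem (hx.1 r)]; rfl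
    rw [h1, one_mul]
    rw [Finset.prod_eq_one]
    · rfl
    intro u hu
    have hur : u ≠ r := (Finset.mem_erase.mp hu).1
    rw [gfun, Set.indicator_of_mem (hx.1 u),
      Set.indicator_of_mem (hx.2 u _ (par_adj hG hur))]
    simp
  · rw [Set.indicator_of_notMem hx]
    rw [mpModel, Set.mem_setOf_eq] at hx
    by_cases hD1 : ∀ u, x u ∈ D u
    · have hE : ¬ ∀ i j, G.Adj i j → (x i, x j) ∈ Dij i j := fun h => hx ⟨hD1, h⟩
      push_neg at hE
      obtain ⟨a, b, hab, hnot⟩ := hE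
      by_cases hb : b = par hG r a
      · have har : a ≠ r := by
          rintro rfl
          rw [par, if_pos rfl] at hb
          subst hb
          exact G.irrefl hab
        have hg0 : gfun hG r D Dij a x = 0 := by
          rw [gfun, Set.indicator_of_notMem (s := Dij a (par hG r a))
            (by rw [← hb]; exact hnot), mul_zero]
        rw [Finset.prod_eq_zero (Finset.mem_erase.mpr ⟨har, Finset.mem_univ a⟩) hg0,
          mul_zero]
      · have hbr : b ≠ r := child_ne_root hG hab hb
        have hparb : par hG r b = a := child_par hG hab hb
        have hnot' : (x b, x a) ∉ Dij b a := fun h => hnot ((hsym b a (x b, x a)).mp h)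
        have hg0 : gfun hG r D Dij b x = 0 := by
          rw [gfun, Set.indicator_of_notMem (s := Dij b (par hG r b))
            (by rw [hparb]; exact hnot'), mul_zero]
        rw [Finset.prod_eq_zero (Finset.mem_erase.mpr ⟨hbr, Finset.mem_univ b⟩) hg0,
          mul_zero]
    · push_neg at hD1
      obtain ⟨u, hu⟩ := hD1
      by_cases hur : u = r
      · subst hur
        rw [Set.indicator_of_notMem hu, zero_mul]
      · have hg0 : gfun hG r D Dij u x = 0 := by
          rw [gfun, Set.indicator_of_notMem (s := D u) hu, zero_mul]
        rw [Finset.prod_eq_zero (Finset.mem_erase.mpr ⟨hur, Finset.mem_univ u⟩) hg0,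
          mul_zero]

/-- The key identity: the integral over the model region of a function of the root
coordinate is computed by the beliefs at the root. -/
lemma key_lintegral [DecidableRel G.Adj] (hG : G.IsTree)
    (hD : ∀ i, MeasurableSet (D i)) (hDij : ∀ i j, MeasurableSet (Dij i j))
    (hsym : ∀ i j, ∀ p : ℝ × ℝ, p ∈ Dij i j ↔ p.swap ∈ Dij j i)
    (m : V → V → ℝ → ℝ≥0∞)
    (hm : ∀ i j, G.Adj i j → ∀ t : ℝ,
      m i j t = ∫⁻ x : ℝ,
        (Dij i j).indicator (1 : ℝ × ℝ → ℝ≥0∞) (x, t) *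
          (D i).indicator (1 : ℝ → ℝ≥0∞) x *
          ∏ c ∈ (G.neighborFinset i).erase j, m c i x)
    (r : V) (f : ℝ → ℝ≥0∞) (hf : Measurable f) :
    ∫⁻ x in mpModel G D Dij, f (x r)
      = ∫⁻ t : ℝ, f t * ((D r).indicator 1 t * ∏ c ∈ G.neighborFinset r, m c r t) := by
  classical
  have hms := mpModel_measurableSet G hD hDij
  have herase : Finset.univ.erase r = (Cf hG r r).biUnion (Sf hG r) := by
    have h1 := Sf_partition hG r r
    rw [Sf_root hG r] at h1
    rw [h1, Finset.erase_insert (v_not_mem_biUnion hG r r)]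
  set B : (V → ℝ) → ℝ≥0∞ :=
    fun x => f (x r) * (D r).indicator 1 (x r) * ∏ c ∈ Cf hG r r, Wfun hG r D Dij c x
    with hB
  have hgmeas : Measurable (fun y : V → ℝ => f (y r) * (D r).indicator 1 (y r)) :=
    (hf.comp (measurable_pi_apply r)).mul
      ((measurable_one.indicator (hD r)).comp (measurable_pi_apply r))
  have hBmeas : Measurable B :=
    (hgmeas).mul (Finset.measurable_prod _ fun c _ => Wfun_meas hG r hD hDij c)
  have hstep1 : ∫⁻ x in mpModel G D Dij, f (x r) = ∫⁻ x, B x := by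
    rw [← MeasureTheory.lintegral_indicator hms]
    apply MeasureTheory.lintegral_congr
    intro x
    have hind := indicator_eq hG D hsym r x
    rw [herase, Finset.prod_biUnion
      (fun c hc c' hc' hcc' => Sf_disjoint hG hc hc' hcc')] at hind
    by_cases hx : x ∈ mpModel G D Dij
    · rw [Set.indicator_of_mem hx]
      rw [Set.indicator_of_mem hx] at hind
      rw [hB]
      dsimp only
      rw [mul_assoc, show (∏ c ∈ Cf hG r r, Wfun hG r D Dij c x)
          = ∏ c ∈ Cf hG r r, ∏ u ∈ Sf hG r c, gfun hG r D Dij u x from rfl, ← hind]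
      rw [Pi.one_apply, mul_one]
    · rw [Set.indicator_of_notMem hx]
      rw [Set.indicator_of_notMem hx] at hind
      rw [hB]
      dsimp only
      rw [mul_assoc, show (∏ c ∈ Cf hG r r, Wfun hG r D Dij c x)
          = ∏ c ∈ Cf hG r r, ∏ u ∈ Sf hG r c, gfun hG r D Dij u x from rfl, ← hind]
      rw [mul_zero]
  rw [hstep1]
  have hvol : (volume : Measure (V → ℝ)) = MeasureTheory.Measure.pi fun _ => volume :=
    MeasureTheory.volume_pi
  rw [hvol, MeasureTheory.lintegral_eq_lmarginal_univ (fun _ => (0 : ℝ))]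
  have huniv : (Finset.univ : Finset V) = insert r (Finset.univ.erase r) :=
    (Finset.insert_erase (Finset.mem_univ r)).symm
  rw [huniv, Finset.insert_eq,
    MeasureTheory.lmarginal_union _ _ hBmeas
      (Finset.disjoint_singleton_left.mpr (Finset.notMem_erase r _))]
  have hstep4 : (∫⋯∫⁻_(Finset.univ.erase r), B)
      = fun x => f (x r) * (D r).indicator 1 (x r) * ∏ c ∈ Cf hG r r, m c r (x r) := by
    rw [herase]
    have hsplit := lmarginal_prod_split (Cf hG r r) (Sf hG r)
      (fun c => Wfun hG r D Dij c) (fun y => f (y r) * (D r).indicator 1 (y r))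
      (fun c _ => Wfun_meas hG r hD hDij c) hgmeas
      (fun c hc c' hc' hcc' => Sf_disjoint hG hc hc' hcc')
      (fun c hc => by
        intro x y hxy
        dsimp only
        rw [hxy r (r_not_mem_Sf hG
          (child_ne_root hG ((mem_Cf hG).mp hc).1 ((mem_Cf hG).mp hc).2))])
      (fun c hc c' hc' hcc' => Wfun_unused_sibling hG r hc hc' hcc')
    refine Eq.trans hsplit ?_
    funext y
    rw [mul_assoc, ← mul_assoc]
    congr 1
    apply Finset.prod_congr rfl
    intro c hc
    obtain ⟨h1, h2⟩ := (mem_Cf hG).mp hc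
    rw [claim hG r hD hDij m hm (Sf hG r c).card c le_rfl (child_ne_root hG h1 h2) y,
      child_par hG h1 h2]
  rw [hstep4, MeasureTheory.lmarginal_singleton]
  apply MeasureTheory.lintegral_congr
  intro t
  simp only [Function.update_self]
  rw [Cf_root hG r]
  ring

end Root

end MPaux

open MPaux

/-- Proposition 7, statistical moments via message passing: let `i` be a
vertex and `κ` a positive integer. If `x ↦ x_i^κ` is Lebesgue-integrable over `Δ` and
`0 < volume Δ < ∞`, then `∫_Δ x_i^κ dx = ∫ 1[t ∈ D_i] · t^κ · b_i(t) dt` ; consequently the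
`κ`-th moment of the coordinate `X_i` under the uniform probability distribution on `Δ`
(the normalized restriction of Lebesgue measure to `Δ`) equals
`(1/volume Δ) · ∫ 1[t ∈ D_i] · t^κ · b_i(t) dt`. -/
theorem moments_message_passing {V : Type*} [Fintype V] [DecidableEq V]
    (G : SimpleGraph V) [DecidableRel G.Adj] (hG : G.IsTree)
    (D : V → Set ℝ) (hD : ∀ i, MeasurableSet (D i))
    (Dij : V → V → Set (ℝ × ℝ)) (hDij : ∀ i j, MeasurableSet (Dij i j))
    (hsym : ∀ i j, ∀ p : ℝ × ℝ, p ∈ Dij i j ↔ p.swap ∈ Dij j i)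
    (m : V → V → ℝ → ℝ≥0∞)
    (hm : ∀ i j, G.Adj i j → ∀ t : ℝ,
      m i j t = ∫⁻ x : ℝ,
        (Dij i j).indicator (1 : ℝ × ℝ → ℝ≥0∞) (x, t) *
          (D i).indicator (1 : ℝ → ℝ≥0∞) x *
          ∏ c ∈ (G.neighborFinset i).erase j, m c i x)
    (i : V) (κ : ℕ) (hκ : 0 < κ)
    (hInt : IntegrableOn (fun x : V → ℝ => (x i) ^ κ) (mpModel G D Dij))
    (hpos : 0 < volume (mpModel G D Dij)) (hfin : volume (mpModel G D Dij) < ⊤) :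
    ((∫ x in mpModel G D Dij, (x i) ^ κ)
      = ∫ t : ℝ,
          (D i).indicator
            (fun u => u ^ κ * (∏ c ∈ G.neighborFinset i, m c i u).toReal) t) ∧
    ((∫ x, (x i) ^ κ
        ∂((volume (mpModel G D Dij))⁻¹ • volume.restrict (mpModel G D Dij)))
      = (volume (mpModel G D Dij)).toReal⁻¹ *
          ∫ t : ℝ,
            (D i).indicator
              (fun u => u ^ κ * (∏ c ∈ G.neighborFinset i, m c i u).toReal) t) := by
  classical
  -- measurability of the messages toward the root `i`
  have hmmeas : ∀ c ∈ G.neighborFinset i, Measurable (m c i) := by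
    intro c hc
    have hadj : G.Adj i c := (SimpleGraph.mem_neighborFinset _ _ _).mp hc
    have hcpar : c ≠ par hG i i := by
      rw [par, if_pos rfl]
      exact hadj.ne'
    have hcr : c ≠ i := child_ne_root hG hadj hcpar
    have hpc : par hG i c = i := child_par hG hadj hcpar
    have hkey : ∀ t : ℝ, m c i t
        = (∫⋯∫⁻_(Sf hG i c), Wfun hG i D Dij c) (Function.update (fun _ => (0:ℝ)) i t) := by
      intro t
      rw [claim hG i hD hDij m hm (Sf hG i c).card c le_rfl hcr, hpc,
        Function.update_self]
    have hmeas2 : Measurable fun t : ℝ =>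
        (∫⋯∫⁻_(Sf hG i c), Wfun hG i D Dij c) (Function.update (fun _ => (0:ℝ)) i t) :=
      (Measurable.lmarginal _ (Wfun_meas hG i hD hDij c)).comp
        (measurable_update (fun _ => (0:ℝ)))
    exact (funext hkey : m c i = _) ▸ hmeas2
  have hβmeas : Measurable fun t : ℝ => ∏ c ∈ G.neighborFinset i, m c i t :=
    Finset.measurable_prod _ hmmeas
  set ρ : ℝ → ℝ≥0∞ :=
    fun t => (D i).indicator 1 t * ∏ c ∈ G.neighborFinset i, m c i t with hρ
  have hρmeas : Measurable ρ := (measurable_one.indicator (hD i)).mul hβmeas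
  have hKEY : ∀ f : ℝ → ℝ≥0∞, Measurable f →
      ∫⁻ x in mpModel G D Dij, f (x i) = ∫⁻ t : ℝ, f t * ρ t := fun f hf =>
    key_lintegral hG hD hDij hsym m hm i f hf
  -- total mass
  have hmass : ∫⁻ t, ρ t = volume (mpModel G D Dij) := by
    have h1 := hKEY (fun _ => 1) measurable_const
    simp only [one_mul] at h1
    rw [← h1, MeasureTheory.setLIntegral_one]
  have hρfin : ∀ᵐ t : ℝ, ρ t < ⊤ :=
    MeasureTheory.ae_lt_top hρmeas (by rw [hmass]; exact hfin.ne)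
  -- positive and negative parts
  have hfpmeas : Measurable fun t : ℝ => ENNReal.ofReal (t ^ κ) :=
    (measurable_id.pow_const κ).ennreal_ofReal
  have hfnmeas : Measurable fun t : ℝ => ENNReal.ofReal (-(t ^ κ)) :=
    ((measurable_id.pow_const κ).neg).ennreal_ofReal
  have hA : ∫⁻ x in mpModel G D Dij, ENNReal.ofReal ((x i) ^ κ)
      = ∫⁻ t, ENNReal.ofReal (t ^ κ) * ρ t := hKEY _ hfpmeas
  have hBB : ∫⁻ x in mpModel G D Dij, ENNReal.ofReal (-((x i) ^ κ))
      = ∫⁻ t, ENNReal.ofReal (-(t ^ κ)) * ρ t := hKEY _ hfnmeas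
  -- finiteness
  have hAfin : ∫⁻ t, ENNReal.ofReal (t ^ κ) * ρ t < ⊤ := by
    rw [← hA]
    refine lt_of_le_of_lt (MeasureTheory.lintegral_mono fun x => ?_) hInt.2
    rw [Real.enorm_eq_ofReal_abs]
    exact ENNReal.ofReal_le_ofReal (le_abs_self _)
  have hBfin : ∫⁻ t, ENNReal.ofReal (-(t ^ κ)) * ρ t < ⊤ := by
    rw [← hBB]
    refine lt_of_le_of_lt (MeasureTheory.lintegral_mono fun x => ?_) hInt.2
    rw [Real.enorm_eq_ofReal_abs]
    exact ENNReal.ofReal_le_ofReal (neg_le_abs _)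
  -- the target real function
  set h : ℝ → ℝ :=
    (D i).indicator (fun u => u ^ κ * (∏ c ∈ G.neighborFinset i, m c i u).toReal) with hh
  have hhmeas : Measurable h :=
    ((measurable_id.pow_const κ).mul hβmeas.ennreal_toReal).indicator (hD i)
  -- a.e. identities for the positive/negative parts of h
  have hae : ∀ t : ℝ, ρ t < ⊤ →
      ENNReal.ofReal (h t) = ENNReal.ofReal (t ^ κ) * ρ t ∧
      ENNReal.ofReal (-h t) = ENNReal.ofReal (-(t ^ κ)) * ρ t := by
    intro t ht
    by_cases hmem : t ∈ D i
    · have hρt : ρ t = ∏ c ∈ G.neighborFinset i, m c i t := by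
        rw [hρ]
        simp [Set.indicator_of_mem hmem]
      have hβlt : (∏ c ∈ G.neighborFinset i, m c i t) ≠ ⊤ := by
        rw [← hρt]; exact ht.ne
      have hht : h t = t ^ κ * (∏ c ∈ G.neighborFinset i, m c i t).toReal := by
        rw [hh, Set.indicator_of_mem hmem]
      constructor
      · rw [hht, hρt]
        rcases le_or_gt 0 (t ^ κ) with hsgn | hsgn
        · rw [ENNReal.ofReal_mul hsgn, ENNReal.ofReal_toReal hβlt]
        · have htR : (0:ℝ) ≤ (∏ c ∈ G.neighborFinset i, m c i t).toReal :=
            ENNReal.toReal_nonneg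
          rw [ENNReal.ofReal_of_nonpos (by nlinarith),
            ENNReal.ofReal_of_nonpos hsgn.le, zero_mul]
      · rw [hht, hρt, ← neg_mul]
        rcases le_or_gt 0 (t ^ κ) with hsgn | hsgn
        · have htR : (0:ℝ) ≤ (∏ c ∈ G.neighborFinset i, m c i t).toReal :=
            ENNReal.toReal_nonneg
          rw [ENNReal.ofReal_of_nonpos (by nlinarith),
            ENNReal.ofReal_of_nonpos (neg_nonpos.mpr hsgn), zero_mul]
        · rw [ENNReal.ofReal_mul (by linarith), ENNReal.ofReal_toReal hβlt]
    · have hρt : ρ t = 0 := by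
        rw [hρ]
        simp [Set.indicator_of_notMem hmem]
      have hht : h t = 0 := by rw [hh, Set.indicator_of_notMem hmem]
      rw [hht, hρt, mul_zero, mul_zero, neg_zero, ENNReal.ofReal_zero]
      exact ⟨rfl, rfl⟩
  have haep : ∀ᵐ t : ℝ, ENNReal.ofReal (h t) = ENNReal.ofReal (t ^ κ) * ρ t :=
    hρfin.mono fun t ht => (hae t ht).1
  have haen : ∀ᵐ t : ℝ, ENNReal.ofReal (-h t) = ENNReal.ofReal (-(t ^ κ)) * ρ t :=
    hρfin.mono fun t ht => (hae t ht).2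
  -- integrability of h
  have hIh : MeasureTheory.Integrable h := by
    refine ⟨hhmeas.aestronglyMeasurable, ?_⟩
    have hnorm : ∀ t : ℝ, (‖h t‖₊ : ℝ≥0∞)
        = ENNReal.ofReal (h t) + ENNReal.ofReal (-h t) := by
      intro t
      rw [← enorm_eq_nnnorm, Real.enorm_eq_ofReal_abs]
      rcases le_or_gt 0 (h t) with hs | hs
      · rw [abs_of_nonneg hs, ENNReal.ofReal_of_nonpos (neg_nonpos.mpr hs), add_zero]
      · rw [abs_of_neg hs, ENNReal.ofReal_of_nonpos hs.le, zero_add]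
    have : (∫⁻ t, ‖h t‖₊) < ⊤ := by
      calc (∫⁻ t, ‖h t‖₊) = ∫⁻ t, (ENNReal.ofReal (h t) + ENNReal.ofReal (-h t)) :=
            MeasureTheory.lintegral_congr hnorm
        _ = (∫⁻ t, ENNReal.ofReal (h t)) + ∫⁻ t, ENNReal.ofReal (-h t) :=
            MeasureTheory.lintegral_add_left hhmeas.ennreal_ofReal _
        _ = (∫⁻ t, ENNReal.ofReal (t ^ κ) * ρ t)
            + ∫⁻ t, ENNReal.ofReal (-(t ^ κ)) * ρ t := by
            rw [MeasureTheory.lintegral_congr_ae haep,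
              MeasureTheory.lintegral_congr_ae haen]
        _ < ⊤ := ENNReal.add_lt_top.mpr ⟨hAfin, hBfin⟩
    exact this
  -- the two real integrals
  have hL : ∫ x in mpModel G D Dij, (x i) ^ κ
      = (∫⁻ t, ENNReal.ofReal (t ^ κ) * ρ t).toReal
        - (∫⁻ t, ENNReal.ofReal (-(t ^ κ)) * ρ t).toReal := by
    rw [MeasureTheory.integral_eq_lintegral_pos_part_sub_lintegral_neg_part hInt, hA, hBB]
  have hR : ∫ t, h t
      = (∫⁻ t, ENNReal.ofReal (t ^ κ) * ρ t).toReal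
        - (∫⁻ t, ENNReal.ofReal (-(t ^ κ)) * ρ t).toReal := by
    rw [MeasureTheory.integral_eq_lintegral_pos_part_sub_lintegral_neg_part hIh,
      MeasureTheory.lintegral_congr_ae haep, MeasureTheory.lintegral_congr_ae haen]
  have hfirst : (∫ x in mpModel G D Dij, (x i) ^ κ) = ∫ t, h t := hL.trans hR.symm
  refine ⟨hfirst, ?_⟩
  rw [MeasureTheory.integral_smul_measure, smul_eq_mul, ENNReal.toReal_inv, hfirst]
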